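/- Inconsistency of mean-imputation classification: There exist a distribution over (X₁, X₂) with both variances bounded below by τ > 0, and for every ε > 0 a conditional class rule p(y=1 | x₁, x₂) = 1{|x₂ − E[X₂ | x₁]| > ε}, such that the classifier that imputes the missing X₂ by its conditional mean E[X₂ | x₁] and then applies the Bayes rule predicts Y = 0 always, and as ε → 0 its misclassification error under missing X₂ tends to P(X₂ ≠ E[X₂|X₁]) (which can be made arbitrarily close to 1), while the Bayes error given only X₁ observed, for the optimal marginalising classifier, tends to 0. -/

import Mathlib

open MeasureTheory ProbabilityTheory Filter Topology

noncomputable def nuU : Measure ℝ := (2 : ENNReal)⁻¹ • volume.restrict (Set.Icc (-1) 1)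

instance : IsProbabilityMeasure nuU := by
  constructor
  rw [nuU, Measure.smul_apply, Measure.restrict_apply MeasurableSet.univ, Set.univ_inter,
    Real.volume_Icc, smul_eq_mul]
  norm_num
  exact ENNReal.inv_mul_cancel (by norm_num) (by norm_num)

lemma nuU_integral_id : ∫ x, x ∂nuU = 0 := by
  rw [nuU, integral_smul_measure]
  have : ∫ x in Set.Icc (-1:ℝ) 1, x = ∫ x in (-1:ℝ)..1, x := by
    rw [intervalIntegral.integral_of_le (by norm_num), integral_Icc_eq_integral_Ioc]
  rw [this, integral_id]
  norm_num

lemma nuU_integral_sq : ∫ x, x ^ 2 ∂nuU = 1 / 3 := by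
  rw [nuU, integral_smul_measure]
  have : ∫ x in Set.Icc (-1:ℝ) 1, x ^ 2 = ∫ x in (-1:ℝ)..1, x ^ 2 := by
    rw [intervalIntegral.integral_of_le (by norm_num), integral_Icc_eq_integral_Ioc]
  rw [this, integral_pow]
  norm_num [ENNReal.toReal_inv]

lemma nuU_le (s : Set ℝ) : nuU s ≤ 2⁻¹ * volume s := by
  rw [nuU, Measure.smul_apply, smul_eq_mul]
  exact mul_le_mul_right (Measure.restrict_apply_le _ _) _

lemma nuU_singleton (x : ℝ) : nuU {x} = 0 :=
  le_antisymm (by simpa using nuU_le {x}) zero_le'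

lemma nuU_abs_le {ε : ℝ} (hε : 0 < ε) : (nuU {x : ℝ | |x| ≤ ε}).toReal ≤ ε := by
  have h1 : nuU {x : ℝ | |x| ≤ ε} ≤ 2⁻¹ * volume (Set.Icc (-ε) ε) := by
    have : {x : ℝ | |x| ≤ ε} = Set.Icc (-ε) ε := by ext x; simp [abs_le]
    rw [this]; exact nuU_le _
  have h2 : (2:ENNReal)⁻¹ * volume (Set.Icc (-ε) ε) = ENNReal.ofReal ε := by
    rw [Real.volume_Icc]
    rw [show ε - -ε = 2 * ε by ring, ENNReal.ofReal_mul (by norm_num), ← mul_assoc]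
    norm_num
    rw [ENNReal.inv_mul_cancel (by norm_num) (by norm_num), one_mul]
  rw [h2] at h1
  calc (nuU {x : ℝ | |x| ≤ ε}).toReal ≤ (ENNReal.ofReal ε).toReal :=
        ENNReal.toReal_mono ENNReal.ofReal_ne_top h1
    _ = ε := ENNReal.toReal_ofReal hε.le

lemma nuU_gt_one : nuU {x : ℝ | 1 < |x|} = 0 := by
  refine le_antisymm ?_ zero_le'
  rw [nuU, Measure.smul_apply, Measure.restrict_apply (by
    exact measurableSet_lt measurable_const measurable_norm)]
  have : {x : ℝ | 1 < |x|} ∩ Set.Icc (-1) 1 = ∅ := by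
    ext x; simp only [Set.mem_inter_iff, Set.mem_setOf_eq, Set.mem_Icc, Set.mem_empty_iff_false,
      iff_false, not_and, and_imp]
    intro h h1 h2
    exact absurd (abs_le.mpr ⟨h1, h2⟩) (not_le.mpr h)
  simp [this]

lemma small_tendsto :
    Filter.Tendsto (fun ε : ℝ =>
      ((nuU.prod nuU) {p : ℝ × ℝ | ¬ ε < |p.2 - 0|}).toReal)
      (nhdsWithin 0 (Set.Ioi 0)) (nhds 0) := by
  have hsetall : ∀ ε : ℝ, {p : ℝ × ℝ | ¬ ε < |p.2 - 0|}
      = Set.univ ×ˢ {x : ℝ | |x| ≤ ε} := by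
    intro ε; ext ⟨a, b⟩; simp [Set.mem_prod, not_lt]
  refine squeeze_zero' (Filter.Eventually.of_forall fun ε => ENNReal.toReal_nonneg) ?_
    (Filter.tendsto_id.mono_right nhdsWithin_le_nhds)
  filter_upwards [self_mem_nhdsWithin] with ε (hε : ε ∈ Set.Ioi 0)
  rw [hsetall ε, Measure.prod_prod, measure_univ, one_mul]
  exact nuU_abs_le hε

theorem mean_imputation_inconsistent :
    ∃ τ : ℝ, 0 < τ ∧
    ∃ μ : Measure (ℝ × ℝ), IsProbabilityMeasure μ ∧
    ∃ m : ℝ → ℝ, Measurable m ∧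
      (fun p : ℝ × ℝ => m p.1)
        =ᵐ[μ] μ[(fun p : ℝ × ℝ => p.2) | MeasurableSpace.comap Prod.fst inferInstance] ∧
      τ ≤ variance (fun p : ℝ × ℝ => p.1) μ ∧
      τ ≤ variance (fun p : ℝ × ℝ => p.2) μ ∧
      (∀ ε : ℝ, 0 < ε → ∀ x₁ : ℝ,
        (if ε < |m x₁ - m x₁| then (1 : ℕ) else 0) = 0) ∧
      Tendsto (fun ε : ℝ => (μ {p : ℝ × ℝ | ε < |p.2 - m p.1|}).toReal)
        (nhdsWithin 0 (Set.Ioi 0))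
        (nhds ((μ {p : ℝ × ℝ | p.2 ≠ m p.1}).toReal)) ∧
      μ {p : ℝ × ℝ | p.2 ≠ m p.1} = 1 ∧
      Tendsto (fun ε : ℝ => (μ {p : ℝ × ℝ | ¬ ε < |p.2 - m p.1|}).toReal)
        (nhdsWithin 0 (Set.Ioi 0)) (nhds 0) := by
  refine ⟨1/3, by norm_num, nuU.prod nuU, inferInstance, fun _ => 0, measurable_const,
    ?_, ?_, ?_, ?_, ?_, ?_, ?_⟩
  · -- conditional expectation
    set μ := nuU.prod nuU
    have hmapfst : μ.map Prod.fst = nuU := by simp [μ]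
    have hmapsnd : μ.map Prod.snd = nuU := by simp [μ]
    have hindep : IndepFun Prod.snd Prod.fst μ := by
      refine IndepFun.symm ?_
      rw [indepFun_iff_map_prod_eq_prod_map_map measurable_fst.aemeasurable
        measurable_snd.aemeasurable, hmapfst, hmapsnd]
      have : (fun ω : ℝ × ℝ => (ω.1, ω.2)) = id := by funext p; simp
      rw [this, Measure.map_id]
    have hsm : StronglyMeasurable[MeasurableSpace.comap Prod.snd inferInstance]
        (fun p : ℝ × ℝ => p.2) :=
      (Measurable.of_comap_le le_rfl).stronglyMeasurable
    haveI : SigmaFinite (μ.trim (measurable_fst.comap_le)) := inferInstance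
    have hce := condExp_indep_eq (μ := μ) (f := fun p : ℝ × ℝ => p.2)
      measurable_snd.comap_le measurable_fst.comap_le hsm hindep
    have hint : ∫ p : ℝ × ℝ, p.2 ∂μ = 0 := by
      have := integral_map (φ := (Prod.snd : ℝ × ℝ → ℝ)) (μ := μ) (f := fun x : ℝ => x)
        measurable_snd.aemeasurable measurable_id.aestronglyMeasurable
      rw [hmapsnd] at this
      rw [← this]; exact nuU_integral_id
    filter_upwards [hce] with p hp
    simp only [hp, hint]
  · -- variance of fst
    set μ := nuU.prod nuU
    have hmapfst : μ.map Prod.fst = nuU := by simp [μ]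
    have hbad : μ {p : ℝ × ℝ | 1 < |p.1|} = 0 := by
      have : {p : ℝ × ℝ | 1 < |p.1|} = {x : ℝ | 1 < |x|} ×ˢ Set.univ := by
        ext p; simp
      rw [this, Measure.prod_prod, nuU_gt_one, zero_mul]
    have hb : ∀ᵐ p ∂μ, ‖(p : ℝ × ℝ).1‖ ≤ 1 := by
      rw [ae_iff]
      convert hbad using 2
      ext p; simp [Real.norm_eq_abs, not_le]
    have hmem : MemLp (fun p : ℝ × ℝ => p.1) 2 μ :=
      MemLp.of_bound measurable_fst.aestronglyMeasurable 1 hb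
    rw [variance_eq_sub hmem]
    have h2 : ∫ p : ℝ × ℝ, p.1 ^ 2 ∂μ = 1/3 := by
      have := integral_map (φ := (Prod.fst : ℝ × ℝ → ℝ)) (μ := μ) (f := fun x : ℝ => x ^ 2)
        measurable_fst.aemeasurable (by fun_prop)
      rw [hmapfst] at this
      rw [← this]; exact nuU_integral_sq
    have h1 : ∫ p : ℝ × ℝ, p.1 ∂μ = 0 := by
      have := integral_map (φ := (Prod.fst : ℝ × ℝ → ℝ)) (μ := μ) (f := fun x : ℝ => x)
        measurable_fst.aemeasurable measurable_id.aestronglyMeasurable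
      rw [hmapfst] at this
      rw [← this]; exact nuU_integral_id
    simp only [Pi.pow_apply]
    rw [h2, h1]
    norm_num
  · -- variance of snd
    set μ := nuU.prod nuU
    have hmapsnd : μ.map Prod.snd = nuU := by simp [μ]
    have hbad : μ {p : ℝ × ℝ | 1 < |p.2|} = 0 := by
      have : {p : ℝ × ℝ | 1 < |p.2|} = Set.univ ×ˢ {x : ℝ | 1 < |x|} := by
        ext p; simp
      rw [this, Measure.prod_prod, nuU_gt_one, mul_zero]
    have hb : ∀ᵐ p ∂μ, ‖(p : ℝ × ℝ).2‖ ≤ 1 := by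
      rw [ae_iff]
      convert hbad using 2
      ext p; simp [Real.norm_eq_abs, not_le]
    have hmem : MemLp (fun p : ℝ × ℝ => p.2) 2 μ :=
      MemLp.of_bound measurable_snd.aestronglyMeasurable 1 hb
    rw [variance_eq_sub hmem]
    have h2 : ∫ p : ℝ × ℝ, p.2 ^ 2 ∂μ = 1/3 := by
      have := integral_map (φ := (Prod.snd : ℝ × ℝ → ℝ)) (μ := μ) (f := fun x : ℝ => x ^ 2)
        measurable_snd.aemeasurable (by fun_prop)
      rw [hmapsnd] at this
      rw [← this]; exact nuU_integral_sq
    have h1 : ∫ p : ℝ × ℝ, p.2 ∂μ = 0 := by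
      have := integral_map (φ := (Prod.snd : ℝ × ℝ → ℝ)) (μ := μ) (f := fun x : ℝ => x)
        measurable_snd.aemeasurable measurable_id.aestronglyMeasurable
      rw [hmapsnd] at this
      rw [← this]; exact nuU_integral_id
    simp only [Pi.pow_apply]
    rw [h2, h1]
    norm_num
  · intro ε hε x₁
    simp [hε.le, abs_nonneg]
  · -- main tendsto: to 1
    set μ := nuU.prod nuU with hμ
    have hone : μ {p : ℝ × ℝ | p.2 ≠ (fun _ : ℝ => (0:ℝ)) p.1} = 1 := by
      have hzero : μ {p : ℝ × ℝ | p.2 = 0} = 0 := by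
        have : {p : ℝ × ℝ | p.2 = 0} = Set.univ ×ˢ {(0:ℝ)} := by
          ext ⟨a, b⟩; simp [Set.mem_prod, eq_comm]
        rw [this, Measure.prod_prod, nuU_singleton, mul_zero]
      have hcompl : {p : ℝ × ℝ | p.2 ≠ (fun _ : ℝ => (0:ℝ)) p.1} = {p : ℝ × ℝ | p.2 = 0}ᶜ := by
        ext p; simp
      rw [hcompl, measure_compl (by
        exact measurableSet_eq_fun measurable_snd measurable_const) (measure_ne_top μ _),
        hzero, measure_univ, tsub_zero]
    rw [hone, ENNReal.toReal_one]
    have hpt : ∀ ε : ℝ, (μ {p : ℝ × ℝ | ε < |p.2 - (fun _ : ℝ => (0:ℝ)) p.1|}).toReal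
        = 1 - (μ {p : ℝ × ℝ | ¬ ε < |p.2 - 0|}).toReal := by
      intro ε
      have hSm : MeasurableSet {p : ℝ × ℝ | ε < |p.2 - (fun _ : ℝ => (0:ℝ)) p.1|} := by
        exact measurableSet_lt measurable_const ((measurable_snd.sub measurable_const).abs)
      have hadd := measure_add_measure_compl (μ := μ) hSm
      have hcompl : {p : ℝ × ℝ | ε < |p.2 - (fun _ : ℝ => (0:ℝ)) p.1|}ᶜ
          = {p : ℝ × ℝ | ¬ ε < |p.2 - 0|} := by
        ext p; simp
      rw [hcompl, measure_univ] at hadd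
      have := congrArg ENNReal.toReal hadd
      rw [ENNReal.toReal_add (measure_ne_top _ _) (measure_ne_top _ _), ENNReal.toReal_one] at this
      linarith
    have h1 : Filter.Tendsto (fun ε : ℝ =>
        1 - (μ {p : ℝ × ℝ | ¬ ε < |p.2 - 0|}).toReal)
        (nhdsWithin 0 (Set.Ioi 0)) (nhds (1 - 0)) :=
      Filter.Tendsto.sub tendsto_const_nhds small_tendsto
    rw [sub_zero] at h1
    exact h1.congr fun ε => (hpt ε).symm
  · -- measure one
    have hzero : (nuU.prod nuU) {p : ℝ × ℝ | p.2 = 0} = 0 := by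
      have : {p : ℝ × ℝ | p.2 = 0} = Set.univ ×ˢ {(0:ℝ)} := by
        ext ⟨a, b⟩; simp [Set.mem_prod, eq_comm]
      rw [this, Measure.prod_prod, nuU_singleton, mul_zero]
    have hcompl : {p : ℝ × ℝ | p.2 ≠ (fun _ : ℝ => (0:ℝ)) p.1} = {p : ℝ × ℝ | p.2 = 0}ᶜ := by
      ext p; simp
    rw [hcompl, measure_compl (by
      exact measurableSet_eq_fun measurable_snd measurable_const) (measure_ne_top _ _),
      hzero, measure_univ, tsub_zero]
  · -- small tendsto: to 0
    exact small_tendsto
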